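/- Let μ be a probability measure on a measurable space (Ω, 𝓕), let f : Ω → ℝ be measurable, let δ > 2 and let n ≥ 1 be an integer. Set A_n := {x ∈ Ω : δ^n ≤ f(x)² < δ^{n+1}} and f_{n−1} := min((|f| − δ^{(n−1)/2})₊, δ^{n/2} − δ^{(n−1)/2}). Then ∫_{A_n} f² log f² dμ ≤ [(n+1)(log δ)·δ^{n+1} / (δ^{n/2} − δ^{(n−1)/2})²] · ∫_Ω f_{n−1}² dμ. -/

import Mathlib

open MeasureTheory Real Set

/-- Entropy of a nonnegative function `g` with respect to `μ`:
`Ent_μ(g) = μ(g log g) - μ(g) log μ(g)` (with the convention `0 · log 0 = 0`). -/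
noncomputable def Ent {Ω : Type*} [MeasurableSpace Ω] (μ : Measure Ω) (g : Ω → ℝ) : ℝ :=
  (∫ x, g x * Real.log (g x) ∂μ) - (∫ x, g x ∂μ) * Real.log (∫ x, g x ∂μ)

/-- Truncation `f_n := min((|f| - δ^{n/2})₊, δ^{(n+1)/2} - δ^{n/2})`. -/
noncomputable def trunc {Ω : Type*} (f : Ω → ℝ) (δ : ℝ) (n : ℕ) : Ω → ℝ :=
  fun x => min (max (|f x| - δ ^ ((n : ℝ) / 2)) 0) (δ ^ (((n : ℝ) + 1) / 2) - δ ^ ((n : ℝ) / 2))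

/-- The `μ`-essential supremum of `|f|`. -/
noncomputable def essNorm {Ω : Type*} [MeasurableSpace Ω] (μ : Measure Ω) (f : Ω → ℝ) : ℝ :=
  (eLpNorm f ⊤ μ).toReal

/-- `ξ₁(t) := inf { r / (1 - t β(r)) : r > 0, 1 - t β(r) > 0 }`. -/
noncomputable def xi1 (β : ℝ → ℝ) (t : ℝ) : ℝ :=
  sInf {y | ∃ r, 0 < r ∧ 0 < 1 - t * β r ∧ y = r / (1 - t * β r)}

/-- `ξ₂(t) := inf { r / (t - β(r)) : r > 0, t - β(r) > 0 }`. -/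
noncomputable def xi2 (β : ℝ → ℝ) (t : ℝ) : ℝ :=
  sInf {y | ∃ r, 0 < r ∧ 0 < t - β r ∧ y = r / (t - β r)}

/-- Estimate (2.6): the entropy integrand over the slice `A_n` is controlled by the
`L²`-norm of the truncation `f_{n-1}`. -/
theorem setIntegral_sq_log_le {Ω : Type*} [MeasurableSpace Ω]
    (μ : Measure Ω) [IsProbabilityMeasure μ]
    (f : Ω → ℝ) (hf : Measurable f) (δ : ℝ) (hδ : 2 < δ) (n : ℕ) (hn : 1 ≤ n) :
    (∫ x in {x | δ ^ (n : ℝ) ≤ f x ^ 2 ∧ f x ^ 2 < δ ^ ((n : ℝ) + 1)},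
        f x ^ 2 * Real.log (f x ^ 2) ∂μ) ≤
      ((n : ℝ) + 1) * Real.log δ * δ ^ ((n : ℝ) + 1) /
          (δ ^ ((n : ℝ) / 2) - δ ^ (((n : ℝ) - 1) / 2)) ^ 2 *
        ∫ x, trunc f δ (n - 1) x ^ 2 ∂μ := by
  have hδ0 : (0:ℝ) < δ := by linarith
  have hδ1 : (1:ℝ) < δ := by linarith
  have hlog : 0 < Real.log δ := Real.log_pos hδ1
  set a := δ ^ (((n : ℝ) - 1) / 2) with ha
  set b := δ ^ ((n : ℝ) / 2) with hb
  have hapos : 0 < a := Real.rpow_pos_of_pos hδ0 _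
  have hbpos : 0 < b := Real.rpow_pos_of_pos hδ0 _
  have hab : a < b := by
    rw [ha, hb, Real.rpow_lt_rpow_left_iff hδ1]
    linarith
  set c := b - a with hc
  have hcpos : 0 < c := by simp only [hc]; linarith
  set A := {x | δ ^ (n : ℝ) ≤ f x ^ 2 ∧ f x ^ 2 < δ ^ ((n : ℝ) + 1)} with hA
  have hAmeas : MeasurableSet A :=
    (measurableSet_le measurable_const (hf.pow_const 2)).inter
      (measurableSet_lt (hf.pow_const 2) measurable_const)
  have hcast : ((n - 1 : ℕ) : ℝ) = (n : ℝ) - 1 := by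
    push_cast [hn]; ring
  have hexp : ((n:ℝ) - 1 + 1) / 2 = (n:ℝ) / 2 := by ring
  have hb2 : b ^ 2 = δ ^ (n : ℝ) := by
    rw [hb, ← Real.rpow_natCast (δ ^ ((n:ℝ)/2)) 2, ← Real.rpow_mul hδ0.le]
    norm_num
  have htr : ∀ x ∈ A, trunc f δ (n-1) x = c := by
    intro x hx
    have hfb : b ≤ |f x| := by
      have h1 : b ^ 2 ≤ |f x| ^ 2 := by rw [hb2, sq_abs]; exact hx.1
      nlinarith [abs_nonneg (f x)]
    unfold trunc
    rw [hcast, hexp, ← ha, ← hb, ← hc]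
    rw [max_eq_left (by linarith), min_eq_right (by linarith)]
  have htrunc_mem : ∀ x, 0 ≤ trunc f δ (n-1) x ∧ trunc f δ (n-1) x ≤ c := by
    intro x
    unfold trunc
    rw [hcast, hexp, ← ha, ← hb, ← hc]
    exact ⟨le_min (le_max_right _ _) hcpos.le, min_le_right _ _⟩
  set K := ((n:ℝ)+1) * Real.log δ * δ ^ ((n:ℝ)+1) with hK
  have hKpos : 0 < K := by
    apply mul_pos (mul_pos (by positivity) hlog) (Real.rpow_pos_of_pos hδ0 _)
  have hbound : ∀ x ∈ A, ‖f x ^ 2 * Real.log (f x ^ 2)‖ ≤ K := by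
    intro x hx
    have h1 : (1:ℝ) ≤ δ ^ (n:ℝ) := by
      rw [show (1:ℝ) = δ ^ (0:ℝ) by simp, Real.rpow_le_rpow_left_iff hδ1]
      positivity
    have hf2 : (1:ℝ) ≤ f x ^ 2 := le_trans h1 hx.1
    have hlognn : 0 ≤ Real.log (f x ^ 2) := Real.log_nonneg hf2
    have hlogle : Real.log (f x ^ 2) ≤ ((n:ℝ)+1) * Real.log δ := by
      calc Real.log (f x ^ 2) ≤ Real.log (δ ^ ((n:ℝ)+1)) :=
            Real.log_le_log (by linarith) hx.2.le
        _ = ((n:ℝ)+1) * Real.log δ := Real.log_rpow hδ0 _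
    rw [norm_eq_abs, abs_of_nonneg (mul_nonneg (by positivity) hlognn)]
    calc f x ^ 2 * Real.log (f x ^ 2) ≤ δ ^ ((n:ℝ)+1) * (((n:ℝ)+1) * Real.log δ) :=
          mul_le_mul hx.2.le hlogle hlognn (Real.rpow_pos_of_pos hδ0 _).le
      _ = K := by rw [hK]; ring
  have hμA : μ A < ⊤ := measure_lt_top μ A
  have hint1 : ∫ x in A, f x ^ 2 * Real.log (f x ^ 2) ∂μ ≤ K * (μ A).toReal := by
    calc ∫ x in A, f x ^ 2 * Real.log (f x ^ 2) ∂μ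
        ≤ ‖∫ x in A, f x ^ 2 * Real.log (f x ^ 2) ∂μ‖ := le_abs_self _
      _ ≤ K * (μ A).toReal := by
          apply norm_setIntegral_le_of_norm_le_const hμA hbound
  have hmtr : Measurable (trunc f δ (n-1)) :=
    ((hf.abs.sub measurable_const).max measurable_const).min measurable_const
  have hintegrable : Integrable (fun x => trunc f δ (n-1) x ^ 2) μ := by
    apply Integrable.mono' (integrable_const (c^2)) (hmtr.pow_const 2).aestronglyMeasurable
    refine ae_of_all _ fun x => ?_
    rw [norm_eq_abs, abs_of_nonneg (sq_nonneg _)]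
    exact pow_le_pow_left₀ (htrunc_mem x).1 (htrunc_mem x).2 2
  have hint2 : c^2 * (μ A).toReal ≤ ∫ x, trunc f δ (n-1) x ^ 2 ∂μ := by
    have heq : ∫ x in A, trunc f δ (n-1) x ^ 2 ∂μ = c^2 * (μ A).toReal := by
      rw [setIntegral_congr_fun hAmeas (fun x hx => by rw [htr x hx]),
        setIntegral_const, smul_eq_mul, mul_comm]
      rfl
    rw [← heq]
    exact setIntegral_le_integral hintegrable (ae_of_all _ fun x => sq_nonneg _)
  calc ∫ x in A, f x ^ 2 * Real.log (f x ^ 2) ∂μ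
      ≤ K * (μ A).toReal := hint1
    _ = K / c^2 * (c^2 * (μ A).toReal) := by field_simp
    _ ≤ K / c^2 * ∫ x, trunc f δ (n-1) x ^ 2 ∂μ :=
        mul_le_mul_of_nonneg_left hint2 (div_nonneg hKpos.le (sq_nonneg c))
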